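/- Let H be a bialgebra, A a left H-module algebra, and F a normalized cocycle twist on H. Then the map φ: A_F ⋊ H^F → A ⋊ H defined by φ(a ⋊ L) = (F̄₁ ▷ a) ⋊ F̄₂L is an algebra isomorphism between the smash product of the twisted module algebra A_F with the twisted bialgebra H^F and the original smash product A ⋊ H, with inverse φ⁻¹(a ⋊ L) = (F₁ ▷ a) ⋊ F₂L. -/

import Mathlib

open TensorProduct

/-- Embedding of `H ⊗ H` into the first and second factors of `H ⊗ H ⊗ H`. -/
noncomputable def leg12 (K H : Type) [CommRing K] [Ring H] [Algebra K H] :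
    H ⊗[K] H →ₐ[K] H ⊗[K] (H ⊗[K] H) :=
  Algebra.TensorProduct.map (AlgHom.id K H) Algebra.TensorProduct.includeLeft

/-- Embedding of `H ⊗ H` into the second and third factors of `H ⊗ H ⊗ H`. -/
noncomputable def leg23 (K H : Type) [CommRing K] [Ring H] [Algebra K H] :
    H ⊗[K] H →ₐ[K] H ⊗[K] (H ⊗[K] H) :=
  Algebra.TensorProduct.includeRight

/-- Embedding of `H ⊗ H` into the first and third factors of `H ⊗ H ⊗ H`. -/
noncomputable def leg13 (K H : Type) [CommRing K] [Ring H] [Algebra K H] :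
    H ⊗[K] H →ₐ[K] H ⊗[K] (H ⊗[K] H) :=
  Algebra.TensorProduct.map (AlgHom.id K H) Algebra.TensorProduct.includeRight

/-- `Δ ⊗ id` as a map `H ⊗ H → H ⊗ (H ⊗ H)`. -/
noncomputable def copL (K H : Type) [CommRing K] [Ring H] [Bialgebra K H] :
    H ⊗[K] H →ₗ[K] H ⊗[K] (H ⊗[K] H) :=
  (TensorProduct.assoc K H H H).toLinearMap ∘ₗ
    TensorProduct.map Coalgebra.comul LinearMap.id

/-- `id ⊗ Δ` as a map `H ⊗ H → H ⊗ (H ⊗ H)`. -/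
noncomputable def copR (K H : Type) [CommRing K] [Ring H] [Bialgebra K H] :
    H ⊗[K] H →ₗ[K] H ⊗[K] (H ⊗[K] H) :=
  TensorProduct.map LinearMap.id Coalgebra.comul

/-- `ε ⊗ id : H ⊗ H → H`. -/
noncomputable def ctL (K H : Type) [CommRing K] [Ring H] [Bialgebra K H] :
    H ⊗[K] H →ₗ[K] H :=
  (TensorProduct.lid K H).toLinearMap ∘ₗ TensorProduct.map Coalgebra.counit LinearMap.id

/-- `id ⊗ ε : H ⊗ H → H`. -/
noncomputable def ctR (K H : Type) [CommRing K] [Ring H] [Bialgebra K H] :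
    H ⊗[K] H →ₗ[K] H :=
  (TensorProduct.rid K H).toLinearMap ∘ₗ TensorProduct.map LinearMap.id Coalgebra.counit
/-- The twisted star product `a ⋆_F b = (F̄₁ ▷ a) · (F̄₂ ▷ b)` determined by the
action `act` and the inverse twist `Finv`. -/
noncomputable def starF {K H A : Type} [CommRing K] [Ring H] [Bialgebra K H]
    [Ring A] [Algebra K A]
    (act : H →ₗ[K] A →ₗ[K] A) (Finv : H ⊗[K] H) (a b : A) : A :=
  LinearMap.mul' K A ((TensorProduct.map (act.flip a) (act.flip b)) Finv)

/-- For `G = Σ G₁ ⊗ G₂ ∈ H ⊗ H`, the element `Σ (G₂ ▷ a) ⊗ G₁` of `A ⊗ H`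
(e.g. the target map `t(a) = (R₂ ▷ a) ⋊ R₁` of the smash product bialgebroid). -/
noncomputable def tmap {K H A : Type} [CommRing K] [Ring H] [Bialgebra K H]
    [Ring A] [Algebra K A]
    (act : H →ₗ[K] A →ₗ[K] A) (a : A) (G : H ⊗[K] H) : A ⊗[K] H :=
  (TensorProduct.comm K H A) ((TensorProduct.map LinearMap.id (act.flip a)) G)

/-- The bialgebroid counit `ε̃(a ⋊ L) = ε(L) a` of the smash product `A ⋊ H`. -/
noncomputable def epsSm (K H A : Type) [CommRing K] [Ring H] [Bialgebra K H]
    [Ring A] [Algebra K A] : A ⊗[K] H →ₗ[K] A :=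
  (TensorProduct.rid K A).toLinearMap ∘ₗ TensorProduct.map LinearMap.id Coalgebra.counit



theorem exists_fin_rep {K M N : Type} [CommRing K] [AddCommGroup M] [AddCommGroup N]
    [Module K M] [Module K N] (x : M ⊗[K] N) :
    ∃ (n : ℕ) (a : Fin n → M) (b : Fin n → N), x = ∑ i, a i ⊗ₜ[K] b i := by
  induction x with
  | zero => exact ⟨0, ![], ![], by simp⟩
  | tmul m n => exact ⟨1, ![m], ![n], by simp⟩
  | add x y hx hy =>
    obtain ⟨n, a, b, rfl⟩ := hx
    obtain ⟨m, c, d, rfl⟩ := hy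
    exact ⟨n + m, Fin.append a c, Fin.append b d, by
      rw [Fin.sum_univ_add]; simp [Fin.append]⟩

/-- `starF` as a linear map in its last argument. -/
noncomputable def starLm {K H A : Type} [CommRing K] [Ring H] [Bialgebra K H]
    [Ring A] [Algebra K A] (act : H →ₗ[K] A →ₗ[K] A) (Finv : H ⊗[K] H) (a : A) :
    A →ₗ[K] A :=
  LinearMap.mul' K A ∘ₗ
    ((TensorProduct.mapBilinear (σ₁₂ := RingHom.id K) (M := H) (N := H) (M₂ := A) (N₂ := A) (act.flip a)).comp act.flip).flip Finv

theorem starLm_apply {K H A : Type} [CommRing K] [Ring H] [Bialgebra K H]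
    [Ring A] [Algebra K A] (act : H →ₗ[K] A →ₗ[K] A) (Finv : H ⊗[K] H) (a c : A) :
    starLm act Finv a c = starF act Finv a c := by
  simp [starLm, starF, TensorProduct.mapBilinear]

section CopAlg

variable (K H : Type) [CommRing K] [Ring H] [Bialgebra K H]

noncomputable def copLA : H ⊗[K] H →ₐ[K] H ⊗[K] (H ⊗[K] H) :=
  ((Algebra.TensorProduct.assoc K K K H H H).toAlgHom).comp
    (Algebra.TensorProduct.map (Bialgebra.comulAlgHom K H) (AlgHom.id K H))

theorem copL_eq : copL K H = (copLA K H).toLinearMap := by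
  apply TensorProduct.ext'
  intro x y
  simp only [copL, copLA, LinearMap.coe_comp, LinearEquiv.coe_coe, Function.comp_apply,
    TensorProduct.map_tmul, LinearMap.id_coe, id_eq, AlgHom.coe_comp,
    AlgHom.toLinearMap_apply, Algebra.TensorProduct.map_tmul, Bialgebra.comulAlgHom_apply,
    AlgHom.coe_id]
  rfl

noncomputable def copRA : H ⊗[K] H →ₐ[K] H ⊗[K] (H ⊗[K] H) :=
  Algebra.TensorProduct.map (AlgHom.id K H) (Bialgebra.comulAlgHom K H)

theorem copR_eq : copR K H = (copRA K H).toLinearMap := by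
  apply TensorProduct.ext'
  intro x y
  simp [copR, copRA]

noncomputable def ctLA : H ⊗[K] H →ₐ[K] H :=
  ((Algebra.TensorProduct.lid K H).toAlgHom).comp
    (Algebra.TensorProduct.map (Bialgebra.counitAlgHom K H) (AlgHom.id K H))

theorem ctL_eq : ctL K H = (ctLA K H).toLinearMap := by
  apply TensorProduct.ext'
  intro x y
  simp [ctL, ctLA]

variable {K H}

theorem inv_cocycle (F Finv : H ⊗[K] H) (hinv₁ : F * Finv = 1) (hinv₂ : Finv * F = 1)
    (hcoc : leg12 K H F * copL K H F = leg23 K H F * copR K H F) :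
    copL K H Finv * leg12 K H Finv = copR K H Finv * leg23 K H Finv := by
  have hcopL : ∀ x y : H ⊗[K] H, x * y = 1 → copL K H x * copL K H y = 1 := by
    intro x y h
    simp only [copL_eq, AlgHom.toLinearMap_apply, ← map_mul, h, map_one]
  have hcopR : ∀ x y : H ⊗[K] H, x * y = 1 → copR K H x * copR K H y = 1 := by
    intro x y h
    simp only [copR_eq, AlgHom.toLinearMap_apply, ← map_mul, h, map_one]
  have hQ1P : (copL K H Finv * leg12 K H Finv) * (leg12 K H F * copL K H F) = 1 := by
    have h1 : (leg12 K H) Finv * (leg12 K H) F = 1 := by rw [← map_mul, hinv₂, map_one]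
    calc (copL K H Finv * leg12 K H Finv) * (leg12 K H F * copL K H F)
        = copL K H Finv * ((leg12 K H Finv * leg12 K H F) * copL K H F) := by
          rw [mul_assoc, mul_assoc]
      _ = 1 := by rw [h1, one_mul, hcopL _ _ hinv₂]
  have hPQ2 : (leg23 K H F * copR K H F) * (copR K H Finv * leg23 K H Finv) = 1 := by
    have h1 : (leg23 K H) F * (leg23 K H) Finv = 1 := by rw [← map_mul, hinv₁, map_one]
    calc (leg23 K H F * copR K H F) * (copR K H Finv * leg23 K H Finv)
        = leg23 K H F * ((copR K H F * copR K H Finv) * leg23 K H Finv) := by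
          rw [mul_assoc, mul_assoc]
      _ = 1 := by rw [hcopR _ _ hinv₁, one_mul, h1]
  exact left_inv_eq_right_inv hQ1P (hcoc ▸ hPQ2)

end CopAlg

/-- Auxiliary evaluation map `u ⊗ v ⊗ w ↦ (u ▷ a)((vc) ▷ b) ⊗ wd`. -/
noncomputable def theta {K H A : Type} [CommRing K] [Ring H] [Bialgebra K H]
    [Ring A] [Algebra K A] (act : H →ₗ[K] A →ₗ[K] A) (a b : A) (c d : H) :
    H ⊗[K] (H ⊗[K] H) →ₗ[K] A ⊗[K] H :=
  (TensorProduct.map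
      (LinearMap.mul' K A ∘ₗ TensorProduct.map (act.flip a)
        ((act.flip b) ∘ₗ (LinearMap.mul K H).flip c))
      ((LinearMap.mul K H).flip d)) ∘ₗ (TensorProduct.assoc K H H H).symm.toLinearMap

theorem theta_tmul {K H A : Type} [CommRing K] [Ring H] [Bialgebra K H]
    [Ring A] [Algebra K A] (act : H →ₗ[K] A →ₗ[K] A) (a b : A) (c d u v w : H) :
    theta act a b c d (u ⊗ₜ[K] (v ⊗ₜ[K] w)) = (act u a * act (v * c) b) ⊗ₜ[K] (w * d) := by
  simp [theta]

theorem sum_comm3 {M : Type} [AddCommMonoid M] {α β γ : Type}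
    [Fintype α] [Fintype β] [Fintype γ] (T : α → β → γ → M) :
    ∑ q, ∑ s, ∑ j, T q s j = ∑ s, ∑ j, ∑ q, T q s j := by
  rw [Finset.sum_comm]
  exact Finset.sum_congr rfl fun s _ => Finset.sum_comm

theorem sum_comm4 {M : Type} [AddCommMonoid M] {α β γ δ : Type}
    [Fintype α] [Fintype β] [Fintype γ] [Fintype δ] (T : α → β → γ → δ → M) :
    ∑ p, ∑ s, ∑ j, ∑ i, T p s j i = ∑ s, ∑ j, ∑ i, ∑ p, T p s j i := by
  rw [Finset.sum_comm]
  refine Finset.sum_congr rfl fun s _ => ?_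
  rw [Finset.sum_comm]
  exact Finset.sum_congr rfl fun j _ => Finset.sum_comm

theorem sum_comm5 {M : Type} [AddCommMonoid M] {α β γ δ ε : Type}
    [Fintype α] [Fintype β] [Fintype γ] [Fintype δ] [Fintype ε]
    (T : α → β → γ → δ → ε → M) :
    ∑ p, ∑ s, ∑ j, ∑ q, ∑ i, T p s j q i = ∑ q, ∑ p, ∑ s, ∑ j, ∑ i, T p s j q i := by
  trans ∑ p, ∑ s, ∑ q, ∑ j, ∑ i, T p s j q i
  · exact Finset.sum_congr rfl fun p _ => Finset.sum_congr rfl fun s _ => Finset.sum_comm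
  trans ∑ p, ∑ q, ∑ s, ∑ j, ∑ i, T p s j q i
  · exact Finset.sum_congr rfl fun p _ => Finset.sum_comm
  exact Finset.sum_comm

set_option maxHeartbeats 1600000 in
/-- `φ(a ⋊ L) = (F̄₁ ▷ a) ⋊ F̄₂L` is an algebra isomorphism
`A_F ⋊ H^F → A ⋊ H`, with inverse `ψ(a ⋊ L) = (F₁ ▷ a) ⋊ F₂L`. -/
theorem twisted_smash_product_isomorphism
    {K H A : Type} [CommRing K] [Ring H] [Bialgebra K H] [Ring A] [Algebra K A]
    (act : H →ₗ[K] A →ₗ[K] A)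
    (hact_one : ∀ a : A, act 1 a = a)
    (hact_mul : ∀ (L J : H) (a : A), act (L * J) a = act L (act J a))
    (hact_unit : ∀ L : H, act L (1 : A) = Coalgebra.counit (R := K) L • (1 : A))
    (hact_alg : ∀ (L : H) (a b : A) (n : ℕ) (L1 L2 : Fin n → H),
      Coalgebra.comul (R := K) L = ∑ i, L1 i ⊗ₜ[K] L2 i →
      act L (a * b) = ∑ i, act (L1 i) a * act (L2 i) b)
    -- F is a normalized cocycle twist
    (F Finv : H ⊗[K] H)
    (hinv₁ : F * Finv = 1) (hinv₂ : Finv * F = 1)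
    (hcoc : leg12 K H F * copL K H F = leg23 K H F * copR K H F)
    (hnorm₁ : ctL K H F = 1) (hnorm₂ : ctR K H F = 1)
    -- the smash product multiplication of A ⋊ H
    (m : (A ⊗[K] H) →ₗ[K] (A ⊗[K] H) →ₗ[K] (A ⊗[K] H))
    (hm : ∀ (a b : A) (L J : H) (n : ℕ) (L1 L2 : Fin n → H),
      Coalgebra.comul (R := K) L = ∑ i, L1 i ⊗ₜ[K] L2 i →
      m (a ⊗ₜ[K] L) (b ⊗ₜ[K] J) = ∑ i, (a * act (L1 i) b) ⊗ₜ[K] (L2 i * J))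
    -- the smash product multiplication of A_F ⋊ H^F
    (mF : (A ⊗[K] H) →ₗ[K] (A ⊗[K] H) →ₗ[K] (A ⊗[K] H))
    (hmF : ∀ (a b : A) (L J : H) (n : ℕ) (L1 L2 : Fin n → H),
      F * Coalgebra.comul (R := K) L * Finv = ∑ i, L1 i ⊗ₜ[K] L2 i →
      mF (a ⊗ₜ[K] L) (b ⊗ₜ[K] J) =
        ∑ i, starF act Finv a (act (L1 i) b) ⊗ₜ[K] (L2 i * J))
    -- the maps φ and ψ
    (φ ψ : A ⊗[K] H →ₗ[K] A ⊗[K] H)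
    (hφ : ∀ (a : A) (L : H) (n : ℕ) (g1 g2 : Fin n → H),
      Finv = ∑ i, g1 i ⊗ₜ[K] g2 i →
      φ (a ⊗ₜ[K] L) = ∑ i, act (g1 i) a ⊗ₜ[K] (g2 i * L))
    (hψ : ∀ (a : A) (L : H) (n : ℕ) (f1 f2 : Fin n → H),
      F = ∑ i, f1 i ⊗ₜ[K] f2 i →
      ψ (a ⊗ₜ[K] L) = ∑ i, act (f1 i) a ⊗ₜ[K] (f2 i * L)) :
    -- φ is an algebra isomorphism with inverse ψ
    (∀ x y : A ⊗[K] H, φ (mF x y) = m (φ x) (φ y)) ∧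
    φ ((1 : A) ⊗ₜ[K] (1 : H)) = (1 : A) ⊗ₜ[K] (1 : H) ∧
    (∀ x : A ⊗[K] H, ψ (φ x) = x) ∧
    (∀ x : A ⊗[K] H, φ (ψ x) = x) := by
  classical
  obtain ⟨nf, f1, f2, hF⟩ := exists_fin_rep F
  obtain ⟨ng, g1, g2, hG⟩ := exists_fin_rep Finv
  -- map-level characterizations
  have hφ2 : ∀ (a : A) (L : H), φ (a ⊗ₜ[K] L) =
      TensorProduct.map (act.flip a) ((LinearMap.mul K H).flip L) Finv := by
    intro a L
    obtain ⟨n, u1, u2, h⟩ := exists_fin_rep Finv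
    rw [hφ a L n u1 u2 h, h]
    simp [map_sum]
  have hψ2 : ∀ (a : A) (L : H), ψ (a ⊗ₜ[K] L) =
      TensorProduct.map (act.flip a) ((LinearMap.mul K H).flip L) F := by
    intro a L
    obtain ⟨n, u1, u2, h⟩ := exists_fin_rep F
    rw [hψ a L n u1 u2 h, h]
    simp [map_sum]
  have hm2 : ∀ (a b : A) (L J : H), m (a ⊗ₜ[K] L) (b ⊗ₜ[K] J) =
      TensorProduct.map ((LinearMap.mulLeft K a).comp (act.flip b))
        ((LinearMap.mul K H).flip J) (Coalgebra.comul (R := K) L) := by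
    intro a b L J
    obtain ⟨n, u1, u2, h⟩ := exists_fin_rep (Coalgebra.comul (R := K) L)
    rw [hm a b L J n u1 u2 h, h]
    simp [map_sum]
  have hmF2 : ∀ (a b : A) (L J : H), mF (a ⊗ₜ[K] L) (b ⊗ₜ[K] J) =
      TensorProduct.map ((starLm act Finv a).comp (act.flip b))
        ((LinearMap.mul K H).flip J) (F * Coalgebra.comul (R := K) L * Finv) := by
    intro a b L J
    obtain ⟨n, u1, u2, h⟩ := exists_fin_rep (F * Coalgebra.comul (R := K) L * Finv)
    rw [hmF a b L J n u1 u2 h, h]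
    simp [map_sum, starLm_apply]
  have hact2 : ∀ (Lx : H) (x y : A), act Lx (x * y) =
      (LinearMap.mul' K A ∘ₗ TensorProduct.map (act.flip x) (act.flip y))
        (Coalgebra.comul (R := K) Lx) := by
    intro Lx x y
    obtain ⟨n, u1, u2, h⟩ := exists_fin_rep (Coalgebra.comul (R := K) Lx)
    rw [hact_alg Lx x y n u1 u2 h, h]
    simp [map_sum]
  have hstar : ∀ (a c : A), starF act Finv a c = ∑ i, act (g1 i) a * act (g2 i) c := by
    intro a c
    rw [starF, hG]
    simp [map_sum]
  have hcm : ∀ x y : H, Coalgebra.comul (R := K) (x * y) =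
      Coalgebra.comul (R := K) x * Coalgebra.comul (R := K) y := by
    intro x y
    simpa using map_mul (Bialgebra.comulAlgHom K H) x y
  -- part 2
  have part2 : φ ((1 : A) ⊗ₜ[K] (1 : H)) = (1 : A) ⊗ₜ[K] (1 : H) := by
    have hct : ctL K H Finv = 1 := by
      have h : ctL K H (F * Finv) = ctL K H F * ctL K H Finv := by
        simp only [ctL_eq, AlgHom.toLinearMap_apply, map_mul]
      rw [hinv₁, hnorm₁, one_mul] at h
      rw [← h]
      simp only [ctL_eq, AlgHom.toLinearMap_apply, map_one]
    have hctv : ctL K H Finv = ∑ i, (Coalgebra.counit (R := K) (g1 i)) • g2 i := by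
      rw [hG]
      simp [ctL, map_sum, TensorProduct.lid_tmul]
    rw [hctv] at hct
    rw [hφ2, hG, map_sum]
    calc ∑ i, (TensorProduct.map (act.flip (1:A)) ((LinearMap.mul K H).flip (1:H)))
          (g1 i ⊗ₜ[K] g2 i)
        = ∑ i, (1 : A) ⊗ₜ[K] ((Coalgebra.counit (R := K) (g1 i)) • g2 i) := by
          refine Finset.sum_congr rfl fun i _ => ?_
          simp [hact_unit, smul_tmul]
      _ = (1 : A) ⊗ₜ[K] ((1 : H)) := by rw [← tmul_sum, hct]
  -- parts 3, 4 on pure tensors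
  have h34 : ∀ (a : A) (L : H), ψ (φ (a ⊗ₜ[K] L)) = a ⊗ₜ[K] L := by
    intro a L
    have h2 : a ⊗ₜ[K] L =
        TensorProduct.map (act.flip a) ((LinearMap.mul K H).flip L) (F * Finv) := by
      rw [hinv₁, Algebra.TensorProduct.one_def]
      simp [hact_one]
    have h1 : F * Finv = ∑ p, ∑ i, (f1 p * g1 i) ⊗ₜ[K] (f2 p * g2 i) := by
      rw [hF, hG, Finset.sum_mul_sum]
      simp [Algebra.TensorProduct.tmul_mul_tmul]
    calc ψ (φ (a ⊗ₜ[K] L))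
        = ∑ i, ∑ p, act (f1 p) (act (g1 i) a) ⊗ₜ[K] (f2 p * (g2 i * L)) := by
          rw [hφ2, hG, map_sum, map_sum]
          refine Finset.sum_congr rfl fun i _ => ?_
          rw [TensorProduct.map_tmul]
          simp only [LinearMap.flip_apply, LinearMap.mul_apply']
          rw [hψ2, hF, map_sum]
          simp [map_sum]
      _ = a ⊗ₜ[K] L := by
          rw [Finset.sum_comm, h2, h1, map_sum]
          refine Finset.sum_congr rfl fun p _ => ?_
          rw [map_sum]
          simp [hact_mul, mul_assoc]
  have h43 : ∀ (a : A) (L : H), φ (ψ (a ⊗ₜ[K] L)) = a ⊗ₜ[K] L := by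
    intro a L
    have h2 : a ⊗ₜ[K] L =
        TensorProduct.map (act.flip a) ((LinearMap.mul K H).flip L) (Finv * F) := by
      rw [hinv₂, Algebra.TensorProduct.one_def]
      simp [hact_one]
    have h1 : Finv * F = ∑ i, ∑ p, (g1 i * f1 p) ⊗ₜ[K] (g2 i * f2 p) := by
      rw [hF, hG, Finset.sum_mul_sum]
      simp [Algebra.TensorProduct.tmul_mul_tmul]
    calc φ (ψ (a ⊗ₜ[K] L))
        = ∑ p, ∑ i, act (g1 i) (act (f1 p) a) ⊗ₜ[K] (g2 i * (f2 p * L)) := by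
          rw [hψ2, hF, map_sum, map_sum]
          refine Finset.sum_congr rfl fun p _ => ?_
          rw [TensorProduct.map_tmul]
          simp only [LinearMap.flip_apply, LinearMap.mul_apply']
          rw [hφ2, hG, map_sum]
          simp [map_sum]
      _ = a ⊗ₜ[K] L := by
          rw [Finset.sum_comm, h2, h1, map_sum]
          refine Finset.sum_congr rfl fun i _ => ?_
          rw [map_sum]
          simp [hact_mul, mul_assoc]
  -- part 1 on pure tensors
  have key : ∀ (a b : A) (L J : H),
      φ (mF (a ⊗ₜ[K] L) (b ⊗ₜ[K] J)) = m (φ (a ⊗ₜ[K] L)) (φ (b ⊗ₜ[K] J)) := by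
    intro a b L J
    obtain ⟨nL, L1, L2, hL⟩ := exists_fin_rep (Coalgebra.comul (R := K) L)
    have hcoc2 : copL K H Finv * leg12 K H Finv * leg23 K H F = copR K H Finv := by
      rw [inv_cocycle F Finv hinv₁ hinv₂ hcoc, mul_assoc, ← map_mul, hinv₂, map_one, mul_one]
    -- the right-hand side
    have mainR : ∀ (u : H) (z : H ⊗[K] H),
        ∑ j, TensorProduct.map
            ((LinearMap.mulLeft K (act u a)).comp (act.flip (act (g1 j) b)))
            ((LinearMap.mul K H).flip (g2 j * J)) (z * Coalgebra.comul (R := K) L)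
        = ∑ s, ∑ j, theta act a b (L1 s * g1 j) (L2 s * (g2 j * J)) (u ⊗ₜ[K] z) := by
      intro u z
      induction z with
      | zero => simp
      | add z1 z2 h1 h2 =>
        simp only [add_mul, map_add, tmul_add, Finset.sum_add_distrib, h1, h2]
      | tmul v w =>
        have hz : (v ⊗ₜ[K] w) * Coalgebra.comul (R := K) L
            = ∑ s, (v * L1 s) ⊗ₜ[K] (w * L2 s) := by
          rw [hL, Finset.mul_sum]
          simp [Algebra.TensorProduct.tmul_mul_tmul]
        rw [hz, Finset.sum_comm]
        refine Finset.sum_congr rfl fun j _ => ?_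
        rw [map_sum]
        refine Finset.sum_congr rfl fun s _ => ?_
        simp [theta_tmul, mul_assoc, ← hact_mul]
    have chainR : m (φ (a ⊗ₜ[K] L)) (φ (b ⊗ₜ[K] J))
        = ∑ s, ∑ j, theta act a b (L1 s * g1 j) (L2 s * (g2 j * J)) (copR K H Finv) := by
      have e1 : copR K H Finv = ∑ i, g1 i ⊗ₜ[K] (Coalgebra.comul (R := K) (g2 i)) := by
        rw [hG]; simp [copR, map_sum]
      calc m (φ (a ⊗ₜ[K] L)) (φ (b ⊗ₜ[K] J))
          = ∑ i, ∑ j, m (act (g1 i) a ⊗ₜ[K] (g2 i * L)) (act (g1 j) b ⊗ₜ[K] (g2 j * J)) := by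
            rw [hφ2 a L, hφ2 b J, hG, map_sum, map_sum, LinearMap.sum_apply]
            simp [map_sum]
        _ = ∑ s, ∑ j, theta act a b (L1 s * g1 j) (L2 s * (g2 j * J)) (copR K H Finv) := by
            have step2 : ∀ i j : Fin ng,
                m (act (g1 i) a ⊗ₜ[K] (g2 i * L)) (act (g1 j) b ⊗ₜ[K] (g2 j * J))
                = TensorProduct.map
                    ((LinearMap.mulLeft K (act (g1 i) a)).comp (act.flip (act (g1 j) b)))
                    ((LinearMap.mul K H).flip (g2 j * J))
                    (Coalgebra.comul (R := K) (g2 i) * Coalgebra.comul (R := K) L) := by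
              intro i j
              rw [hm2, hcm]
            simp only [step2]
            rw [e1]
            simp only [map_sum]
            conv_rhs => rw [← sum_comm3]
            exact Finset.sum_congr rfl fun i _ => mainR (g1 i) (Coalgebra.comul (R := K) (g2 i))
    -- the left-hand side
    have e12 : leg12 K H Finv = ∑ i, g1 i ⊗ₜ[K] (g2 i ⊗ₜ[K] (1 : H)) := by
      rw [hG, map_sum]
      simp [leg12]
    have e23 : leg23 K H F = ∑ p, (1 : H) ⊗ₜ[K] (f1 p ⊗ₜ[K] f2 p) := by
      rw [hF, map_sum]
      simp [leg23]
    have eL : copL K H Finv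
        = ∑ q, (TensorProduct.assoc K H H H)
            ((Coalgebra.comul (R := K) (g1 q)) ⊗ₜ[K] g2 q) := by
      rw [hG]
      simp [copL, map_sum]
    have eFLF : F * Coalgebra.comul (R := K) L * Finv
        = ∑ p, ∑ s, ∑ j, ((f1 p * L1 s) * g1 j) ⊗ₜ[K] ((f2 p * L2 s) * g2 j) := by
      rw [hF, hL, hG]
      simp only [Finset.sum_mul, Finset.mul_sum, Algebra.TensorProduct.tmul_mul_tmul]
      trans ∑ s, ∑ j, ∑ p, ((f1 p * L1 s) * g1 j) ⊗ₜ[K] ((f2 p * L2 s) * g2 j)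
      · exact Finset.sum_comm
      trans ∑ s, ∑ p, ∑ j, ((f1 p * L1 s) * g1 j) ⊗ₜ[K] ((f2 p * L2 s) * g2 j)
      · exact Finset.sum_congr rfl fun _ _ => Finset.sum_comm
      exact Finset.sum_comm
    have mainL : ∀ (w : H) (z : H ⊗[K] H),
        ∑ p, ∑ s, ∑ j, ∑ i,
          ((LinearMap.mul' K A ∘ₗ TensorProduct.map (act.flip (act (g1 i) a))
              (act.flip (act (g2 i) (act ((f1 p * L1 s) * g1 j) b)))) z)
            ⊗ₜ[K] (w * (((f2 p * L2 s) * g2 j) * J))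
        = ∑ s, ∑ j, theta act a b (L1 s * g1 j) (L2 s * (g2 j * J))
            ((TensorProduct.assoc K H H H) (z ⊗ₜ[K] w) * leg12 K H Finv * leg23 K H F) := by
      intro w z
      induction z with
      | zero => simp
      | add z1 z2 h1 h2 =>
        simp only [map_add, add_tmul, tmul_add, add_mul, Finset.sum_add_distrib, h1, h2]
      | tmul z1 z2 =>
        rw [e12, e23]
        simp only [TensorProduct.assoc_tmul, Finset.mul_sum, Finset.sum_mul, map_sum,
          Algebra.TensorProduct.tmul_mul_tmul, theta_tmul]
        rw [show ∀ (T : Fin nf → Fin nL → Fin ng → Fin ng → A ⊗[K] H),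
            ∑ p, ∑ s, ∑ j, ∑ i, T p s j i = ∑ s, ∑ j, ∑ p, ∑ i, T p s j i from fun T => by
          rw [Finset.sum_comm]
          exact Finset.sum_congr rfl fun _ _ => Finset.sum_comm]
        simp [mul_assoc, ← hact_mul]
    have chainL : φ (mF (a ⊗ₜ[K] L) (b ⊗ₜ[K] J))
        = ∑ s, ∑ j, theta act a b (L1 s * g1 j) (L2 s * (g2 j * J))
            (copL K H Finv * leg12 K H Finv * leg23 K H F) := by
      calc φ (mF (a ⊗ₜ[K] L) (b ⊗ₜ[K] J))
          = ∑ p, ∑ s, ∑ j, φ ((starF act Finv a (act ((f1 p * L1 s) * g1 j) b))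
              ⊗ₜ[K] (((f2 p * L2 s) * g2 j) * J)) := by
            rw [hmF2, eFLF]
            simp [map_sum, starLm_apply]
        _ = ∑ p, ∑ s, ∑ j, ∑ q, ∑ i,
            ((LinearMap.mul' K A ∘ₗ TensorProduct.map (act.flip (act (g1 i) a))
                (act.flip (act (g2 i) (act ((f1 p * L1 s) * g1 j) b))))
              (Coalgebra.comul (R := K) (g1 q)))
              ⊗ₜ[K] (g2 q * (((f2 p * L2 s) * g2 j) * J)) := by
            refine Finset.sum_congr rfl fun p _ => Finset.sum_congr rfl fun s _ =>
              Finset.sum_congr rfl fun j _ => ?_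
            rw [hφ _ _ ng g1 g2 hG]
            refine Finset.sum_congr rfl fun q _ => ?_
            rw [hstar, map_sum, sum_tmul]
            refine Finset.sum_congr rfl fun i _ => ?_
            rw [hact2]
        _ = ∑ s, ∑ j, theta act a b (L1 s * g1 j) (L2 s * (g2 j * J))
              (copL K H Finv * leg12 K H Finv * leg23 K H F) := by
            rw [eL, Finset.sum_mul, Finset.sum_mul]
            simp only [map_sum]
            rw [sum_comm5]
            conv_rhs => rw [← sum_comm3]
            exact Finset.sum_congr rfl fun q _ =>
              mainL (g2 q) (Coalgebra.comul (R := K) (g1 q))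
    rw [chainL, chainR, hcoc2]
  refine ⟨?_, part2, ?_, ?_⟩
  · intro x y
    induction x with
    | zero => simp
    | add u v hu hv => simp [map_add, LinearMap.add_apply, hu, hv]
    | tmul a L =>
      induction y with
      | zero => simp
      | add u v hu hv => simp [map_add, hu, hv]
      | tmul b J => exact key a b L J
  · intro x
    induction x with
    | zero => simp
    | tmul a L => exact h34 a L
    | add u v hu hv => simp [map_add, hu, hv]
  · intro x
    induction x with
    | zero => simp
    | tmul a L => exact h43 a L
    | add u v hu hv => simp [map_add, hu, hv]
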